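/- Let n be odd with n ≥ 9. Let G be a simple graph on n vertices whose vertex set is partitioned into A ∪ B with |A| = (n+1)/2 and |B| = (n−1)/2, where B is an independent set, and the edges between A and B are exactly all pairs except the single pair (v₁, u₁) for some fixed v₁ ∈ A and u₁ ∈ B. Suppose the induced subgraph G[A] satisfies: deg_{G[A]}(v₁) ≥ 2, and deg_{G[A]}(a) + deg_{G[A]}(b) ≥ 1 for every pair of distinct nonadjacent vertices a, b of G[A]. Then deg_G(u) + deg_G(v) ≥ n for every pair of distinct nonadjacent vertices u, v of G. -/

import Mathlib

open SimpleGraph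

set_option linter.unusedVariables false

/-- The degree of a vertex: the number of its neighbors. -/
noncomputable def deg {α : Type*} (G : SimpleGraph α) (v : α) : ℕ :=
  (G.neighborSet v).ncard

/-- The join of two (disjoint) graphs: both graphs together with all cross edges. -/
def gJoin {α β : Type*} (G : SimpleGraph α) (H : SimpleGraph β) : SimpleGraph (α ⊕ β) where
  Adj u v := match u, v with
    | Sum.inl a, Sum.inl b => G.Adj a b
    | Sum.inr a, Sum.inr b => H.Adj a b
    | _, _ => True
  symm := ⟨by
    rintro (a | a) (b | b) h
    · exact G.adj_symm h
    · trivial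
    · trivial
    · exact H.adj_symm h⟩
  loopless := ⟨by
    rintro (a | a) h
    · exact G.irrefl h
    · exact H.irrefl h⟩

/-- `kK2 k` : the disjoint union of `k` copies of `K₂`. -/
def kK2 (k : ℕ) : SimpleGraph (Fin k × Fin 2) where
  Adj p q := p.1 = q.1 ∧ p.2 ≠ q.2
  symm := ⟨fun p q h => ⟨h.1.symm, h.2.symm⟩⟩
  loopless := ⟨fun p h => h.2 rfl⟩

/-- `G − F`: the subgraph of `G` induced on the complement of the vertex set `F`. -/
def delVerts {W : Type*} [Fintype W] [DecidableEq W] (G : SimpleGraph W) (F : Finset W) :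
    SimpleGraph ((Fᶜ : Finset W) : Set W) :=
  G.induce ((Fᶜ : Finset W) : Set W)

/-- The graph `η₁ = (H_{(n+1)/2} ∨ K̄_{(n−1)/2}) − (v₁, u₁)`, described via a
partition of the vertex set, satisfies the Ore condition `σ₂(G) ≥ n`. -/
theorem statement_6 {V : Type*} [Fintype V] [DecidableEq V] (G : SimpleGraph V)
    (n : ℕ) (hn : n = Fintype.card V) (hodd : Odd n) (hn9 : 9 ≤ n)
    (A B : Set V) (hAB : Disjoint A B) (hU : A ∪ B = Set.univ)
    (hA : A.ncard = (n + 1) / 2) (hB : B.ncard = (n - 1) / 2)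
    (hBind : ∀ u ∈ B, ∀ v ∈ B, ¬G.Adj u v)
    (v₁ u₁ : V) (hv₁ : v₁ ∈ A) (hu₁ : u₁ ∈ B)
    (hcross : ∀ a ∈ A, ∀ b ∈ B, (G.Adj a b ↔ ¬(a = v₁ ∧ b = u₁)))
    (hdegv₁ : 2 ≤ (G.neighborSet v₁ ∩ A).ncard)
    (hsigmaA : ∀ a ∈ A, ∀ b ∈ A, a ≠ b → ¬G.Adj a b →
      1 ≤ (G.neighborSet a ∩ A).ncard + (G.neighborSet b ∩ A).ncard) :
    ∀ u v : V, u ≠ v → ¬G.Adj u v → n ≤ deg G u + deg G v := by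

  obtain ⟨k, hk⟩ := hodd
  have hk4 : 4 ≤ k := by omega
  have hA' : A.ncard = k + 1 := by rw [hA]; omega
  have hB' : B.ncard = k := by rw [hB]; omega
  have hmem : ∀ w : V, w ∈ A ∨ w ∈ B := by
    intro w
    have : w ∈ A ∪ B := by rw [hU]; trivial
    exact this
  have hsplit : ∀ w : V, deg G w =
      (G.neighborSet w ∩ A).ncard + (G.neighborSet w ∩ B).ncard := by
    intro w
    have h1 : G.neighborSet w = (G.neighborSet w ∩ A) ∪ (G.neighborSet w ∩ B) := by
      rw [← Set.inter_union_distrib_left, hU, Set.inter_univ]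
    rw [deg]
    conv_lhs => rw [h1]
    exact Set.ncard_union_eq (hAB.mono Set.inter_subset_right Set.inter_subset_right)
      (Set.toFinite _) (Set.toFinite _)
  have hNB : ∀ a ∈ A, a ≠ v₁ → G.neighborSet a ∩ B = B := by
    intro a ha hav
    ext b
    simp only [Set.mem_inter_iff, mem_neighborSet]
    constructor
    · rintro ⟨_, hb⟩; exact hb
    · intro hb; exact ⟨(hcross a ha b hb).2 (fun h => hav h.1), hb⟩
  have hNBv₁ : G.neighborSet v₁ ∩ B = B \ {u₁} := by
    ext b
    simp only [Set.mem_inter_iff, mem_neighborSet, Set.mem_diff, Set.mem_singleton_iff]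
    constructor
    · rintro ⟨hadj, hb⟩
      refine ⟨hb, fun h => ?_⟩
      exact ((hcross v₁ hv₁ b hb).1 hadj) ⟨rfl, h⟩
    · rintro ⟨hb, hbu⟩
      exact ⟨(hcross v₁ hv₁ b hb).2 (fun h => hbu h.2), hb⟩
  have hNA : ∀ b ∈ B, b ≠ u₁ → G.neighborSet b ∩ A = A := by
    intro b hb hbu
    ext a
    simp only [Set.mem_inter_iff, mem_neighborSet]
    constructor
    · rintro ⟨_, ha⟩; exact ha
    · intro ha; exact ⟨((hcross a ha b hb).2 (fun h => hbu h.2)).symm, ha⟩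
  have hNAu₁ : G.neighborSet u₁ ∩ A = A \ {v₁} := by
    ext a
    simp only [Set.mem_inter_iff, mem_neighborSet, Set.mem_diff, Set.mem_singleton_iff]
    constructor
    · rintro ⟨hadj, ha⟩
      refine ⟨ha, fun h => ?_⟩
      exact ((hcross a ha u₁ hu₁).1 hadj.symm) ⟨h, rfl⟩
    · rintro ⟨ha, hav⟩
      exact ⟨((hcross a ha u₁ hu₁).2 (fun h => hav h.1)).symm, ha⟩
  have hNBB : ∀ b ∈ B, G.neighborSet b ∩ B = ∅ := by
    intro b hb
    ext c
    simp only [Set.mem_inter_iff, mem_neighborSet, Set.mem_empty_iff_false, iff_false, not_and]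
    intro h hc
    exact hBind b hb c hc h
  have degB : ∀ b ∈ B, b ≠ u₁ → deg G b = k + 1 := by
    intro b hb hbu
    rw [hsplit b, hNA b hb hbu, hNBB b hb, hA', Set.ncard_empty]
  have degu₁ : deg G u₁ = k := by
    rw [hsplit u₁, hNAu₁, hNBB u₁ hu₁, Set.ncard_empty,
      Set.ncard_diff_singleton_of_mem hv₁, hA']
    omega
  have degA : ∀ a ∈ A, a ≠ v₁ → deg G a = (G.neighborSet a ∩ A).ncard + k := by
    intro a ha hav
    rw [hsplit a, hNB a ha hav, hB']
  have degv₁ : deg G v₁ = (G.neighborSet v₁ ∩ A).ncard + (k - 1) := by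
    rw [hsplit v₁, hNBv₁, Set.ncard_diff_singleton_of_mem hu₁, hB']
  intro u v huv hadj
  have hadj' : ¬G.Adj v u := fun h => hadj h.symm
  rcases hmem u with hu | hu <;> rcases hmem v with hv | hv
  · by_cases h1 : u = v₁
    · have h2 : v ≠ v₁ := fun h => huv (h1.trans h.symm)
      rw [h1, degv₁, degA v hv h2]
      omega
    · by_cases h2 : v = v₁
      · rw [h2, degA u hu h1, degv₁]
        omega
      · have h3 := hsigmaA u hu v hv huv hadj
        rw [degA u hu h1, degA v hv h2]
        omega
  · have h : u = v₁ ∧ v = u₁ := by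
      by_contra h; exact hadj ((hcross u hu v hv).2 h)
    obtain ⟨h1, h2⟩ := h
    rw [h1, h2, degv₁, degu₁]
    omega
  · have h : v = v₁ ∧ u = u₁ := by
      by_contra h; exact hadj' ((hcross v hv u hu).2 h)
    obtain ⟨h1, h2⟩ := h
    rw [h1, h2, degv₁, degu₁]
    omega
  · by_cases h1 : u = u₁
    · have h2 : v ≠ u₁ := fun h => huv (h1.trans h.symm)
      rw [h1, degu₁, degB v hv h2]
      omega
    · by_cases h2 : v = u₁
      · rw [h2, degB u hu h1, degu₁]
        omega
      · rw [degB u hu h1, degB v hv h2]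
        omega
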